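/- Let X = [x_ij] be an n×n doubly stochastic matrix all of whose entries are positive, and suppose that all diagonal sums of X are equal, i.e., ∑_{i=1}^n x_{i,σ(i)} is the same for every permutation σ of {1,…,n}. Then x_ij = 1/n for all i, j; that is, the only RCDS doubly stochastic matrix without any zeros is (1/n)J_n, where J_n is the n×n all-ones matrix. -/

import Mathlib

/-- The only doubly stochastic matrix with all entries positive and all diagonal
sums equal is `(1/n) Jₙ`. -/
theorem rcds_positive_eq_uniform {n : ℕ} (X : Matrix (Fin n) (Fin n) ℝ)
    (hnonneg : ∀ i j, 0 ≤ X i j)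
    (hrow : ∀ i, ∑ j, X i j = 1)
    (hcol : ∀ j, ∑ i, X i j = 1)
    (hpos : ∀ i j, 0 < X i j)
    (hconst : ∀ σ τ : Equiv.Perm (Fin n), ∑ i, X i (σ i) = ∑ i, X i (τ i)) :
    ∀ i j, X i j = 1 / (n : ℝ) := by
  have key : ∀ (i k j l : Fin n), i ≠ k → j ≠ l →
      X i j + X k l = X i l + X k j := by
    intro i k j l hik hjl
    set e := Equiv.swap i j with he
    have hei : e i = j := Equiv.swap_apply_left i j
    have hek : e k ≠ j := fun h => hik (e.injective (hei.trans h.symm))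
    set σ := (Equiv.swap (e k) l) * e with hσ
    have hσi : σ i = j := by
      show (Equiv.swap (e k) l) (e i) = j
      rw [hei]
      exact Equiv.swap_apply_of_ne_of_ne (Ne.symm hek) hjl
    have hσk : σ k = l := by
      show (Equiv.swap (e k) l) (e k) = l
      exact Equiv.swap_apply_left _ _
    have h := hconst σ (σ * Equiv.swap i k)
    have hk_mem : k ∈ Finset.univ.erase i :=
      Finset.mem_erase.mpr ⟨hik.symm, Finset.mem_univ k⟩
    have split : ∀ f : Fin n → ℝ,
        ∑ m, f m = f i + (f k + ∑ m ∈ (Finset.univ.erase i).erase k, f m) := by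
      intro f
      rw [Finset.add_sum_erase _ f hk_mem, Finset.add_sum_erase _ f (Finset.mem_univ i)]
    rw [split (fun m => X m (σ m)), split (fun m => X m ((σ * Equiv.swap i k) m))] at h
    have hrest : ∑ m ∈ (Finset.univ.erase i).erase k, X m (σ m)
        = ∑ m ∈ (Finset.univ.erase i).erase k, X m ((σ * Equiv.swap i k) m) := by
      apply Finset.sum_congr rfl
      intro m hm
      have hmi : m ≠ i := Finset.mem_erase.mp (Finset.mem_erase.mp hm).2 |>.1
      have hmk : m ≠ k := (Finset.mem_erase.mp hm).1
      have : (Equiv.swap i k) m = m := Equiv.swap_apply_of_ne_of_ne hmi hmk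
      simp [Equiv.Perm.mul_apply, this]
    have hti : (σ * Equiv.swap i k) i = l := by
      simp [Equiv.Perm.mul_apply, Equiv.swap_apply_left, hσk]
    have htk : (σ * Equiv.swap i k) k = j := by
      simp [Equiv.Perm.mul_apply, Equiv.swap_apply_right, hσi]
    rw [hrest] at h
    simp only [hσi, hσk, hti, htk] at h
    linarith
  have hXeq : ∀ (i k j : Fin n), X i j = X k j := by
    intro i k j
    by_cases hik : i = k
    · rw [hik]
    · have hd : ∀ l : Fin n, X i l - X k l = X i j - X k j := by
        intro l
        by_cases hlj : l = j
        · rw [hlj]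
        · have := key i k j l hik (fun h => hlj h.symm)
          linarith
      have hsum : ∑ l, (X i l - X k l) = 0 := by
        rw [Finset.sum_sub_distrib, hrow i, hrow k]; ring
      have hsum2 : ∑ l : Fin n, (X i l - X k l) = (n : ℝ) * (X i j - X k j) := by
        rw [Finset.sum_congr rfl (fun l _ => hd l)]
        simp [Finset.sum_const, mul_comm]
        ring
      have hn : (n : ℝ) ≠ 0 := by
        have : 0 < n := Fin.pos i
        exact_mod_cast this.ne'
      have := hsum2.symm.trans hsum
      have := mul_eq_zero.mp this
      rcases this with h | h
      · exact absurd h hn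
      · linarith
  intro i j
  have hn : 0 < n := Fin.pos i
  have hc : ∑ m, X m j = 1 := hcol j
  have : ∑ m : Fin n, X m j = (n : ℝ) * X i j := by
    rw [Finset.sum_congr rfl (fun m _ => hXeq m i j)]
    simp [Finset.sum_const, mul_comm]
  rw [this] at hc
  field_simp at hc ⊢
  linarith
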